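/- (Shielding lemma) Fix d ≥ 2, let (t_e)_{e∈E^d} be i.i.d. nonnegative real random variables, and fix M > 0; declare an edge e open if t_e ≤ M. Let Λ be a finite subset of e_1 + 3Z^d (where e_1 is the first coordinate vector), and define the random set V_Λ to be the set of v ∈ Λ such that (A) v − e_1 belongs to an infinite open cluster, and (B) every nearest-neighbor edge joining two vertices of {z ∈ Z^d : ‖z − v‖_∞ = 1} is open. For a finite set V ⊆ Λ and a threshold r > 0, let N_{V,r} be the number of v ∈ V such that every edge incident to v has weight > r. Then for every such V and r, the random variable N_{V,r} and the event {V_Λ = V} are independent. -/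

import Mathlib

open MeasureTheory ProbabilityTheory Filter Set
open scoped ENNReal NNReal

namespace FPPBoundary

/-- Vertices of `ℤ^d`. -/
abbrev V (d : ℕ) := Fin d → ℤ

/-- Nearest-neighbor adjacency in `ℤ^d`. -/
def adj {d : ℕ} (x y : V d) : Prop := (∑ i, |x i - y i|) = 1

/-- `e` is a nearest-neighbor edge of `ℤ^d`. -/
def IsEdge {d : ℕ} (e : Sym2 (V d)) : Prop := ∃ x y : V d, adj x y ∧ e = s(x, y)

/-- The set of nearest-neighbor edges, as a type. -/
abbrev Edge (d : ℕ) := {e : Sym2 (V d) // IsEdge e}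

/-- `γ : Fin (n+1) → V d` is a lattice path from `x` to `y`. -/
def IsPathFrom {d : ℕ} (n : ℕ) (γ : Fin (n + 1) → V d) (x y : V d) : Prop :=
  γ 0 = x ∧ γ (Fin.last n) = y ∧ ∀ i : Fin n, adj (γ i.castSucc) (γ i.succ)

/-- The passage time of a lattice path. -/
noncomputable def pathCost {d : ℕ} (wgt : Sym2 (V d) → ℝ) (n : ℕ)
    (γ : Fin (n + 1) → V d) : ℝ :=
  ∑ i : Fin n, wgt s(γ i.castSucc, γ i.succ)

/-- The first-passage time `T(x,y)`. -/
noncomputable def T {d : ℕ} (wgt : Sym2 (V d) → ℝ) (x y : V d) : ℝ :=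
  sInf {c : ℝ | ∃ n γ, IsPathFrom n γ x y ∧ c = pathCost wgt n γ}

/-- The lattice point `[x]` with `x ∈ [x] + [0,1)^d`. -/
noncomputable def latt {d : ℕ} (x : Fin d → ℝ) : V d := fun i => ⌊x i⌋

/-- The extension of `T` to `ℝ^d × ℝ^d`. -/
noncomputable def Treal {d : ℕ} (wgt : Sym2 (V d) → ℝ) (x y : Fin d → ℝ) : ℝ :=
  T wgt (latt x) (latt y)

/-- The ball `B(t)`. -/
noncomputable def ball {d : ℕ} (wgt : Sym2 (V d) → ℝ) (t : ℝ) : Set (V d) :=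
  {x | T wgt 0 x ≤ t}

/-- The edge boundary `∂ₑ A`. -/
def edgeBoundary {d : ℕ} (A : Set (V d)) : Set (Sym2 (V d)) :=
  {e | ∃ x y : V d, adj x y ∧ x ∈ A ∧ y ∉ A ∧ e = s(x, y)}

/-- The vertex exterior boundary `∂^ext A`. -/
def extVertexBoundary {d : ℕ} (A : Set (V d)) : Set (V d) :=
  {x | x ∉ A ∧ (∃ y ∈ A, adj x y) ∧
    ∃ γ : ℕ → V d, γ 0 = x ∧ Function.Injective γ ∧
      (∀ n, adj (γ n) (γ (n + 1))) ∧ ∀ n, γ n ∉ A}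

/-- The edge exterior boundary `∂ₑ^ext A`. -/
def extEdgeBoundary {d : ℕ} (A : Set (V d)) : Set (Sym2 (V d)) :=
  {e | ∃ x y : V d, adj x y ∧ y ∈ A ∧ x ∈ extVertexBoundary A ∧ e = s(x, y)}

/-- `x` and `y` are joined by a lattice path all of whose edges lie in `O`. -/
def ConnectedIn {d : ℕ} (O : Set (Sym2 (V d))) (x y : V d) : Prop :=
  ∃ n γ, IsPathFrom n γ x y ∧ ∀ i : Fin n, s(γ (Fin.castSucc i), γ i.succ) ∈ O

/-- The open cluster of `x` for the set `O` of open edges. -/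
def cluster {d : ℕ} (O : Set (Sym2 (V d))) (x : V d) : Set (V d) := {y | ConnectedIn O x y}

/-- `c` is an i.i.d. Bernoulli(p) bond configuration under `P`. -/
def IsBernoulliPerc {d : ℕ} {Ω : Type} [MeasurableSpace Ω] (P : Measure Ω) (p : ℝ)
    (c : Ω → Sym2 (V d) → Bool) : Prop :=
  (∀ e : Edge d, Measurable fun ω => c ω e.1) ∧
  iIndepFun (fun (e : Edge d) ω => c ω e.1) P ∧
  ∀ e : Edge d, P {ω | c ω e.1 = true} = ENNReal.ofReal p

/-- The critical probability of Bernoulli bond percolation on `ℤ^d`. -/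
noncomputable def pc (d : ℕ) : ℝ :=
  sSup {p : ℝ | 0 ≤ p ∧ p ≤ 1 ∧
    ∀ (Ω : Type) (_ : MeasurableSpace Ω) (P : Measure Ω), IsProbabilityMeasure P →
      ∀ c : Ω → Sym2 (V d) → Bool, IsBernoulliPerc P p c →
        P {ω | (cluster {e | c ω e = true} 0).Infinite} = 0}

/-- `w` is an i.i.d. family of nonnegative edge-weights with marginal distribution `μ`. -/
def IsIIDWeights {d : ℕ} {Ω : Type} [MeasurableSpace Ω] (P : Measure Ω) (μ : Measure ℝ)
    (w : Ω → Sym2 (V d) → ℝ) : Prop :=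
  (∀ e : Edge d, Measurable fun ω => w ω e.1) ∧
  iIndepFun (fun (e : Edge d) ω => w ω e.1) P ∧
  (∀ e : Edge d, Measure.map (fun ω => w ω e.1) P = μ) ∧
  ∀ (ω) (e : Edge d), 0 ≤ w ω e.1

/-- `Y`: the minimum of the weights of the `2d` edges incident to the origin. -/
noncomputable def Ymin {d : ℕ} (wgt : Sym2 (V d) → ℝ) : ℝ :=
  ⨅ z : {z : V d // adj 0 z}, wgt s(0, z.1)

/-- `E[Y ∧ s]`. -/
noncomputable def EYmin {d : ℕ} {Ω : Type} [MeasurableSpace Ω] (P : Measure Ω)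
    (w : Ω → Sym2 (V d) → ℝ) (s : ℝ) : ℝ :=
  ∫ ω, min (Ymin (w ω)) s ∂P

/-- the distribution function `F_Y` of `Y`. -/
noncomputable def FY {d : ℕ} {Ω : Type} [MeasurableSpace Ω] (P : Measure Ω)
    (w : Ω → Sym2 (V d) → ℝ) (s : ℝ) : ℝ :=
  (P {ω | Ymin (w ω) ≤ s}).toReal

/-- the first coordinate vector. -/
def e1 (d : ℕ) : V d := fun j => if (j : ℕ) = 0 then 1 else 0

/-- `ℓ^∞` norm of a lattice point, as a real number. -/
def linf {d : ℕ} (x : V d) : ℝ := ((Finset.univ.sup fun i => (x i).natAbs : ℕ) : ℝ)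

/-- `ℓ^2` norm on `ℝ^d`. -/
noncomputable def l2 {d : ℕ} (x : Fin d → ℝ) : ℝ := Real.sqrt (∑ i, x i ^ 2)

end FPPBoundary
namespace FPPBoundary

/-- The set `V_Λ` appearing in the shielding lemma: vertices `v ∈ Λ` such that `v - e₁` lies in
an infinite open cluster and all nearest-neighbor edges between vertices of the `ℓ^∞`-sphere of
radius `1` around `v` are open. -/
def shieldSet {d : ℕ} (M : ℝ) (wgt : Sym2 (V d) → ℝ) (Λ : Finset (V d)) : Set (V d) :=
  {v ∈ (Λ : Set (V d)) |
    (cluster {e | wgt e ≤ M} (v - e1 d)).Infinite ∧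
    ∀ y z : V d, (Finset.univ.sup fun j => ((y - v) j).natAbs) = 1 →
      (Finset.univ.sup fun j => ((z - v) j).natAbs) = 1 → adj y z → wgt s(y, z) ≤ M}

section Aux
variable {d : ℕ}

lemma adj_symm {x y : V d} (h : adj x y) : adj y x := by
  unfold adj at *; simpa [abs_sub_comm] using h

def stepRel (O : Set (Sym2 (V d))) (a b : V d) : Prop := adj a b ∧ s(a, b) ∈ O

lemma stepRel_symm {O : Set (Sym2 (V d))} : Symmetric (stepRel O) := by
  rintro a b ⟨h1, h2⟩; exact ⟨adj_symm h1, by rwa [Sym2.eq_swap]⟩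

lemma connectedIn_iff {O : Set (Sym2 (V d))} {x y : V d} :
    ConnectedIn O x y ↔ Relation.ReflTransGen (stepRel O) x y := by
  constructor
  · rintro ⟨n, γ, ⟨h0, hl, hadj⟩, hO⟩
    have key : ∀ i : Fin (n + 1), Relation.ReflTransGen (stepRel O) (γ 0) (γ i) := by
      intro i
      induction i using Fin.induction with
      | zero => exact .refl
      | succ i ih => exact ih.tail ⟨hadj i, hO i⟩
    rw [← h0, ← hl]; exact key _
  · intro h
    induction h with
    | refl => exact ⟨0, fun _ => x, ⟨rfl, rfl, fun i => i.elim0⟩, fun i => i.elim0⟩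
    | @tail b c hxb hbc ih =>
      obtain ⟨n, γ, ⟨h0, hl, hadj⟩, hO⟩ := ih
      refine ⟨n + 1, Fin.snoc γ c, ⟨?_, ?_, ?_⟩, ?_⟩
      · rw [← Fin.castSucc_zero, Fin.snoc_castSucc]; exact h0
      · simp
      · intro i
        induction i using Fin.lastCases with
        | last =>
          rw [Fin.succ_last, Fin.snoc_castSucc, Fin.snoc_last, hl]; exact hbc.1
        | cast j =>
          rw [Fin.succ_castSucc, Fin.snoc_castSucc, Fin.snoc_castSucc]; exact hadj j
      · intro i
        induction i using Fin.lastCases with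
        | last =>
          rw [Fin.succ_last, Fin.snoc_castSucc, Fin.snoc_last, hl]; exact hbc.2
        | cast j =>
          rw [Fin.succ_castSucc, Fin.snoc_castSucc, Fin.snoc_castSucc]; exact hO j

end Aux
section Aux2
variable {d : ℕ}

/-- `a` is on the `ℓ^∞` sphere of radius 1 around `v`. -/
def sph (v a : V d) : Prop := (Finset.univ.sup fun j => ((a - v) j).natAbs) = 1

lemma sph_iff {v a : V d} :
    sph v a ↔ (∀ j, ((a - v) j).natAbs ≤ 1) ∧ ∃ j, a j ≠ v j := by
  unfold sph
  constructor
  · intro h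
    refine ⟨fun j => ?_, ?_⟩
    · rw [← h]
      exact Finset.le_sup (f := fun j => ((a - v) j).natAbs) (Finset.mem_univ j)
    · by_contra hc
      push_neg at hc
      have h0 : (Finset.univ.sup fun j => ((a - v) j).natAbs) = 0 := by
        apply Nat.le_zero.mp
        apply Finset.sup_le
        intro j _
        simp [Pi.sub_apply, Int.natAbs_eq_zero, sub_eq_zero, hc j]
      omega
  · rintro ⟨h1, j, hj⟩
    refine le_antisymm (Finset.sup_le fun k _ => h1 k) ?_
    refine le_trans ?_ (Finset.le_sup (Finset.mem_univ j))
    have : (a - v) j ≠ 0 := sub_ne_zero.2 hj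
    omega

lemma sph_of {v a : V d} (hbd : ∀ j, ((a - v) j).natAbs ≤ 1) {j : Fin d}
    (hnz : a j ≠ v j) : sph v a := sph_iff.2 ⟨hbd, j, hnz⟩

lemma adj_coord_le {x y : V d} (h : adj x y) (j : Fin d) : |x j - y j| ≤ 1 := by
  calc |x j - y j| ≤ ∑ i, |x i - y i| :=
        Finset.single_le_sum (f := fun i => |x i - y i|) (fun i _ => abs_nonneg _)
          (Finset.mem_univ j)
    _ = 1 := h

lemma sph_of_adj {a b : V d} (h : adj a b) : sph a b := by
  rw [sph_iff]
  constructor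
  · intro j
    have h1 := adj_coord_le h j
    have h2 : |(b - a) j| = ((b - a) j).natAbs := Int.abs_eq_natAbs _
    have h3 : |(b - a) j| = |a j - b j| := by rw [Pi.sub_apply, abs_sub_comm]
    omega
  · by_contra hc; push_neg at hc
    have : ∀ i, |a i - b i| = 0 := fun i => by simp [sub_eq_zero, hc i]
    have h0 : (∑ i, |a i - b i|) = 0 := Finset.sum_eq_zero fun i _ => this i
    rw [adj] at h; omega

end Aux2
section Aux3
variable {d : ℕ}

/-- path steps constrained to the sphere around `v` -/
def sphStep (v : V d) (p q : V d) : Prop := adj p q ∧ sph v p ∧ sph v q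

lemma sphStep_symm {v : V d} : Symmetric (sphStep v) := by
  rintro a b ⟨h1, h2, h3⟩; exact ⟨adj_symm h1, h3, h2⟩

lemma adj_update {y : V d} {i : Fin d} {t : ℤ} (h : (y i - t).natAbs = 1) :
    adj y (Function.update y i t) := by
  unfold adj
  rw [Finset.sum_eq_single_of_mem i (Finset.mem_univ i)]
  · rw [Function.update_self, Int.abs_eq_natAbs]
    omega
  · intro k _ hk
    rw [Function.update_of_ne hk]
    simp

lemma sphere_onestep {v y : V d} (hy : ∀ k, ((y - v) k).natAbs ≤ 1) {j : Fin d}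
    (hj : y j ≠ v j) {i : Fin d} (hij : i ≠ j) {t : ℤ} (ht : (t - v i).natAbs ≤ 1)
    (hdist : (y i - t).natAbs ≤ 1) :
    Relation.ReflTransGen (sphStep v) y (Function.update y i t) := by
  rcases eq_or_ne (y i) t with h | h
  · rw [← h, Function.update_eq_self]
  · refine Relation.ReflTransGen.single ⟨adj_update (by omega), sph_of hy hj, ?_⟩
    refine sph_of (fun k => ?_) (j := j) ?_
    · rcases eq_or_ne k i with rfl | hk
      · rw [Pi.sub_apply, Function.update_self]; exact ht
      · rw [Pi.sub_apply, Function.update_of_ne hk]; exact hy k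
    · rwa [Function.update_of_ne (by exact fun hh => hij hh.symm)]

lemma sphere_move {v x : V d} (hx : ∀ k, ((x - v) k).natAbs ≤ 1) {j : Fin d}
    (hj : x j ≠ v j) {i : Fin d} (hij : i ≠ j) {t : ℤ} (ht : (t - v i).natAbs ≤ 1) :
    Relation.ReflTransGen (sphStep v) x (Function.update x i t) := by
  have hxi : ((x - v) i).natAbs ≤ 1 := hx i
  rw [Pi.sub_apply] at hxi
  have step1 : Relation.ReflTransGen (sphStep v) x (Function.update x i (v i)) :=
    sphere_onestep hx hj hij (by simp) (by omega)
  have hbd2 : ∀ k, ((Function.update x i (v i) - v) k).natAbs ≤ 1 := by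
    intro k
    rcases eq_or_ne k i with rfl | hk
    · rw [Pi.sub_apply, Function.update_self]; simp
    · rw [Pi.sub_apply, Function.update_of_ne hk]; exact hx k
  have hj2 : Function.update x i (v i) j ≠ v j := by
    rwa [Function.update_of_ne (fun hh => hij hh.symm)]
  have step2 : Relation.ReflTransGen (sphStep v) (Function.update x i (v i))
      (Function.update (Function.update x i (v i)) i t) :=
    sphere_onestep hbd2 hj2 hij ht (by rw [Function.update_self]; omega)
  rw [Function.update_idem] at step2
  exact step1.trans step2

end Aux3
section Aux4
variable {d : ℕ}

def fin0 (hd : 2 ≤ d) : Fin d := ⟨0, by omega⟩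
def fin1 (hd : 2 ≤ d) : Fin d := ⟨1, by omega⟩

lemma fin0_ne_fin1 (hd : 2 ≤ d) : fin0 hd ≠ fin1 hd := by
  simp [fin0, fin1, Fin.ext_iff]

/-- canonical point on the sphere around `v` -/
def canon (hd : 2 ≤ d) (v : V d) : V d :=
  fun k => if k = fin0 hd ∨ k = fin1 hd then v k + 1 else v k

lemma bd_update {v x : V d} (hbd : ∀ k, ((x - v) k).natAbs ≤ 1) {i : Fin d} {t : ℤ}
    (ht : (t - v i).natAbs ≤ 1) : ∀ k, ((Function.update x i t - v) k).natAbs ≤ 1 := by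
  intro k
  rcases eq_or_ne k i with rfl | hk
  · rw [Pi.sub_apply, Function.update_self]; exact ht
  · rw [Pi.sub_apply, Function.update_of_ne hk]; exact hbd k

lemma sphere_fill (hd : 2 ≤ d) {v : V d} : ∀ n (x : V d),
    (∀ k, ((x - v) k).natAbs ≤ 1) →
    x (fin0 hd) = v (fin0 hd) + 1 → x (fin1 hd) = v (fin1 hd) + 1 →
    (Finset.univ.filter (fun k => x k ≠ canon hd v k)).card = n →
    Relation.ReflTransGen (sphStep v) x (canon hd v) := by
  intro n
  induction n using Nat.strong_induction_on with
  | _ n ih =>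
    intro x hbd h0 h1 hcard
    classical
    rcases Nat.eq_zero_or_pos n with rfl | hpos
    · have hx : x = canon hd v := by
        funext k
        by_contra hk
        have : k ∈ Finset.univ.filter (fun k => x k ≠ canon hd v k) := by
          simp [hk]
        rw [Finset.card_eq_zero] at hcard
        simp [hcard] at this
      rw [hx]
    · have hne : (Finset.univ.filter (fun k => x k ≠ canon hd v k)).Nonempty := by
        rw [← Finset.card_pos, hcard]; exact hpos
      obtain ⟨k, hkmem⟩ := hne
      have hk : x k ≠ canon hd v k := by simpa using hkmem
      have hk0 : k ≠ fin0 hd := by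
        rintro rfl
        exact hk (by simp [canon, h0])
      have hk1 : k ≠ fin1 hd := by
        rintro rfl
        exact hk (by simp [canon, h1])
      have hmove : Relation.ReflTransGen (sphStep v) x (Function.update x k (v k)) :=
        sphere_move hbd (j := fin0 hd) (by rw [h0]; omega) hk0 (by simp)
      have hbd' := bd_update hbd (i := k) (t := v k) (by simp)
      have hfilter : Finset.univ.filter
            (fun k' => Function.update x k (v k) k' ≠ canon hd v k')
          = (Finset.univ.filter (fun k' => x k' ≠ canon hd v k')).erase k := by
        ext k'
        rcases eq_or_ne k' k with rfl | hk'
        · rw [Finset.mem_filter, Finset.mem_erase, Finset.mem_filter]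
          simp [Function.update_self, canon, if_neg (by tauto : ¬(k' = fin0 hd ∨ k' = fin1 hd))]
        · simp [Function.update_of_ne hk', hk']
      have hcard' : (Finset.univ.filter
            (fun k' => Function.update x k (v k) k' ≠ canon hd v k')).card = n - 1 := by
        rw [hfilter, Finset.card_erase_of_mem hkmem, hcard]
      exact hmove.trans (ih (n - 1) (by omega) _ hbd'
        (by rw [Function.update_of_ne (Ne.symm hk0)]; exact h0)
        (by rw [Function.update_of_ne (Ne.symm hk1)]; exact h1) hcard')

lemma sphere_to_canonical (hd : 2 ≤ d) {v a : V d} (ha : sph v a) :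
    Relation.ReflTransGen (sphStep v) a (canon hd v) := by
  classical
  obtain ⟨hbd, j, hj⟩ := sph_iff.1 ha
  set j' : Fin d := if j = fin0 hd then fin1 hd else fin0 hd with hj'def
  have hj'j : j' ≠ j := by
    rcases eq_or_ne j (fin0 hd) with rfl | hne
    · simp only [hj'def, if_pos rfl]
      exact (fin0_ne_fin1 hd).symm
    · simp only [hj'def, if_neg hne]
      exact fun h => hne h.symm
  -- step 1 : make coordinate j' equal to v j' + 1
  set a1 := Function.update a j' (v j' + 1) with ha1def
  have hstep1 : Relation.ReflTransGen (sphStep v) a a1 :=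
    sphere_move hbd hj hj'j (by simp)
  have hbd1 : ∀ k, ((a1 - v) k).natAbs ≤ 1 := bd_update hbd (by simp)
  have ha1j' : a1 j' = v j' + 1 := Function.update_self _ _ _
  -- step 2 : make coordinate fin0 equal to v fin0 + 1
  set a2 := Function.update a1 (fin0 hd) (v (fin0 hd) + 1) with ha2def
  have hstep2 : Relation.ReflTransGen (sphStep v) a1 a2 := by
    rcases eq_or_ne (fin0 hd) j' with he | hne
    · have : a2 = a1 := by
        rw [ha2def, he, ← ha1j', Function.update_eq_self]
      rw [this]
    · exact sphere_move hbd1 (j := j') (by rw [ha1j']; omega) hne (by simp)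
  have hbd2 : ∀ k, ((a2 - v) k).natAbs ≤ 1 := bd_update hbd1 (by simp)
  have ha2f0 : a2 (fin0 hd) = v (fin0 hd) + 1 := Function.update_self _ _ _
  -- step 3 : make coordinate fin1 equal to v fin1 + 1
  set a3 := Function.update a2 (fin1 hd) (v (fin1 hd) + 1) with ha3def
  have hstep3 : Relation.ReflTransGen (sphStep v) a2 a3 :=
    sphere_move hbd2 (j := fin0 hd) (by rw [ha2f0]; omega)
      (fun h => fin0_ne_fin1 hd h.symm) (by simp)
  have hbd3 : ∀ k, ((a3 - v) k).natAbs ≤ 1 := bd_update hbd2 (by simp)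
  have ha3f1 : a3 (fin1 hd) = v (fin1 hd) + 1 := Function.update_self _ _ _
  have ha3f0 : a3 (fin0 hd) = v (fin0 hd) + 1 := by
    rw [ha3def, Function.update_of_ne (fin0_ne_fin1 hd)]; exact ha2f0
  exact (hstep1.trans (hstep2.trans hstep3)).trans
    (sphere_fill hd _ a3 hbd3 ha3f0 ha3f1 rfl)

lemma sphere_conn (hd : 2 ≤ d) {v a b : V d} (ha : sph v a) (hb : sph v b) :
    Relation.ReflTransGen (sphStep v) a b :=
  (sphere_to_canonical hd ha).trans
    (haveI : Std.Symm (sphStep v) := ⟨fun _ _ h => sphStep_symm h⟩;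
        Std.Symm.symm _ _ (sphere_to_canonical hd hb))

end Aux4
section Aux5
variable {d : ℕ}

lemma reroute (hd : 2 ≤ d) {O O' : Set (Sym2 (V d))} {S : Set (V d)}
    (hSadj : ∀ u ∈ S, ∀ b, adj u b → b ∉ S)
    (hSopen : ∀ u ∈ S, ∀ a b, sph u a → sph u b → adj a b → s(a, b) ∈ O')
    (hagree : ∀ a b, adj a b → a ∉ S → b ∉ S → s(a, b) ∈ O → s(a, b) ∈ O')
    {x : V d} (hx : x ∉ S) :
    ∀ {y}, Relation.ReflTransGen (stepRel O) x y →
      (y ∉ S → Relation.ReflTransGen (stepRel O') x y) ∧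
      (y ∈ S → ∃ a, adj a y ∧ Relation.ReflTransGen (stepRel O') x a) := by
  intro y h
  induction h with
  | refl => exact ⟨fun _ => .refl, fun hy => absurd hy hx⟩
  | @tail b c hxb hbc ih =>
    obtain ⟨hbc_adj, hbcO⟩ := hbc
    by_cases hb : b ∈ S
    · have hc : c ∉ S := hSadj b hb c hbc_adj
      obtain ⟨a, ha_adj, hRa⟩ := ih.2 hb
      have hsph_a : sph b a := sph_of_adj (adj_symm ha_adj)
      have hsph_c : sph b c := sph_of_adj hbc_adj
      have hconn : Relation.ReflTransGen (stepRel O') a c :=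
        Relation.ReflTransGen.mono
          (fun p q hpq => ⟨hpq.1, hSopen b hb p q hpq.2.1 hpq.2.2 hpq.1⟩) _ _
          (sphere_conn hd hsph_a hsph_c)
      exact ⟨fun _ => hRa.trans hconn, fun hcS => absurd hcS hc⟩
    · have hRxb := ih.1 hb
      by_cases hc : c ∈ S
      · exact ⟨fun h' => absurd hc h', fun _ => ⟨b, hbc_adj, hRxb⟩⟩
      · exact ⟨fun _ => hRxb.tail ⟨hbc_adj, hagree b c hbc_adj hb hc hbcO⟩,
          fun h' => absurd h' hc⟩

lemma cluster_transfer (hd : 2 ≤ d) {O O' : Set (Sym2 (V d))} {S : Set (V d)}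
    (hSfin : S.Finite)
    (hSadj : ∀ u ∈ S, ∀ b, adj u b → b ∉ S)
    (hSopen : ∀ u ∈ S, ∀ a b, sph u a → sph u b → adj a b → s(a, b) ∈ O')
    (hagree : ∀ a b, adj a b → a ∉ S → b ∉ S → s(a, b) ∈ O → s(a, b) ∈ O')
    {x : V d} (hx : x ∉ S) (hinf : (cluster O x).Infinite) :
    (cluster O' x).Infinite := by
  have hsub : cluster O x \ S ⊆ cluster O' x := by
    rintro y ⟨hy, hyS⟩
    exact connectedIn_iff.2
      ((reroute hd hSadj hSopen hagree hx (connectedIn_iff.1 hy)).1 hyS)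
  exact (hinf.diff hSfin).mono hsub

/-- coordinates of differences of points of `e1 + 3ℤ^d` are divisible by 3. -/
lemma lam_dvd {v u : V d} (hv : ∃ z : V d, v = e1 d + 3 • z)
    (hu : ∃ z : V d, u = e1 d + 3 • z) (j : Fin d) : (3 : ℤ) ∣ (v - u) j := by
  obtain ⟨z, rfl⟩ := hv
  obtain ⟨z', rfl⟩ := hu
  refine ⟨(z - z') j, ?_⟩
  simp [Pi.sub_apply, Pi.add_apply, Pi.smul_apply]
  ring

lemma not_sph_lam {v u : V d} (hv : ∃ z : V d, v = e1 d + 3 • z)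
    (hu : ∃ z : V d, u = e1 d + 3 • z) : ¬ sph v u := by
  intro h
  obtain ⟨hbd, j, hj⟩ := sph_iff.1 h
  have h3 := lam_dvd hu hv j
  have hb := hbd j
  have hne : (u - v) j ≠ 0 := sub_ne_zero.2 hj
  simp only [Pi.sub_apply] at hb h3 hne
  obtain ⟨c, hc⟩ := h3
  omega

lemma not_adj_lam {v u : V d} (hv : ∃ z : V d, v = e1 d + 3 • z)
    (hu : ∃ z : V d, u = e1 d + 3 • z) : ¬ adj v u := by
  intro h
  exact not_sph_lam hv hu (sph_of_adj h)

lemma sub_e1_not_lam (hd : 2 ≤ d) {v u : V d} (hv : ∃ z : V d, v = e1 d + 3 • z)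
    (hu : ∃ z : V d, u = e1 d + 3 • z) : v - e1 d ≠ u := by
  intro h
  obtain ⟨z, hz⟩ := hv
  obtain ⟨z', hz'⟩ := hu
  have h0 : (v - e1 d) (fin0 hd) = u (fin0 hd) := by rw [h]
  have he1 : e1 d (fin0 hd) = 1 := by simp [e1, fin0]
  rw [hz, hz'] at h0
  simp only [Pi.sub_apply, Pi.add_apply, Pi.smul_apply, he1, nsmul_eq_mul, Pi.mul_apply, Pi.natCast_apply] at h0
  omega

end Aux5
section Aux6
variable {d : ℕ}

lemma shield_invariance (hd : 2 ≤ d) (M : ℝ) (Λ : Finset (V d))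
    (hΛ : ∀ v ∈ Λ, ∃ z : V d, v = e1 d + 3 • z) (Vset : Finset (V d)) (hV : Vset ⊆ Λ)
    (wgt wgt' : Sym2 (V d) → ℝ)
    (hagree : ∀ a b : V d, adj a b → (∀ v ∈ Vset, v ≠ a ∧ v ≠ b) →
      wgt s(a, b) = wgt' s(a, b))
    (h : shieldSet M wgt Λ = (Vset : Set (V d))) :
    shieldSet M wgt' Λ = (Vset : Set (V d)) := by
  classical
  have hB : ∀ u ∈ Vset, ∀ y z : V d, sph u y → sph u z → adj y z → wgt s(y, z) ≤ M := by
    intro u hu y z hy hz hyz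
    have hmem : u ∈ shieldSet M wgt Λ := by rw [h]; exact hu
    exact hmem.2.2 y z hy hz hyz
  have hsame : ∀ u ∈ Λ, ∀ y z : V d, sph u y → sph u z → adj y z →
      wgt s(y, z) = wgt' s(y, z) := by
    intro u hu y z hy hz hyz
    refine hagree y z hyz fun p hp => ⟨?_, ?_⟩
    · rintro rfl; exact not_sph_lam (hΛ _ hu) (hΛ _ (hV hp)) hy
    · rintro rfl; exact not_sph_lam (hΛ _ hu) (hΛ _ (hV hp)) hz
  have hB' : ∀ u ∈ Vset, ∀ y z : V d, sph u y → sph u z → adj y z → wgt' s(y, z) ≤ M := by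
    intro u hu y z hy hz hyz
    rw [← hsame u (hV hu) y z hy hz hyz]; exact hB u hu y z hy hz hyz
  have hSadj : ∀ u ∈ (Vset : Set (V d)), ∀ b, adj u b → b ∉ (Vset : Set (V d)) := by
    intro u hu b hub hb
    exact not_adj_lam (hΛ _ (hV hu)) (hΛ _ (hV hb)) hub
  have hSopenO : ∀ u ∈ (Vset : Set (V d)), ∀ a b, sph u a → sph u b → adj a b →
      s(a, b) ∈ {e : Sym2 (V d) | wgt e ≤ M} :=
    fun u hu a b ha hb hab => hB u hu a b ha hb hab
  have hSopenO' : ∀ u ∈ (Vset : Set (V d)), ∀ a b, sph u a → sph u b → adj a b →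
      s(a, b) ∈ {e : Sym2 (V d) | wgt' e ≤ M} :=
    fun u hu a b ha hb hab => hB' u hu a b ha hb hab
  have hagreeOO' : ∀ a b : V d, adj a b → a ∉ (Vset : Set (V d)) → b ∉ (Vset : Set (V d)) →
      s(a, b) ∈ {e : Sym2 (V d) | wgt e ≤ M} → s(a, b) ∈ {e : Sym2 (V d) | wgt' e ≤ M} := by
    intro a b hab ha hb hO
    have he := hagree a b hab (fun p hp => ⟨fun e => ha (e ▸ hp), fun e => hb (e ▸ hp)⟩)
    show wgt' s(a, b) ≤ M
    rw [← he]; exact hO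
  have hagreeO'O : ∀ a b : V d, adj a b → a ∉ (Vset : Set (V d)) → b ∉ (Vset : Set (V d)) →
      s(a, b) ∈ {e : Sym2 (V d) | wgt' e ≤ M} → s(a, b) ∈ {e : Sym2 (V d) | wgt e ≤ M} := by
    intro a b hab ha hb hO
    have he := hagree a b hab (fun p hp => ⟨fun e => ha (e ▸ hp), fun e => hb (e ▸ hp)⟩)
    show wgt s(a, b) ≤ M
    rw [he]; exact hO
  ext v
  constructor
  · rintro ⟨hvΛ, hA', hB'v⟩
    by_contra hvV
    have hvmem : v ∈ shieldSet M wgt Λ := by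
      refine ⟨hvΛ, ?_, ?_⟩
      · have hx : v - e1 d ∉ (Vset : Set (V d)) := by
          intro hx
          exact sub_e1_not_lam hd (hΛ _ hvΛ) (hΛ _ (hV hx)) rfl
        exact cluster_transfer hd Vset.finite_toSet hSadj hSopenO hagreeO'O hx hA'
      · intro y z hy hz hyz
        rw [hsame v hvΛ y z hy hz hyz]; exact hB'v y z hy hz hyz
    rw [h] at hvmem; exact hvV hvmem
  · intro hvV
    have hvmem : v ∈ shieldSet M wgt Λ := by rw [h]; exact hvV
    obtain ⟨hvΛ, hA, hBv⟩ := hvmem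
    refine ⟨hvΛ, ?_, ?_⟩
    · have hx : v - e1 d ∉ (Vset : Set (V d)) := by
        intro hx
        exact sub_e1_not_lam hd (hΛ _ hvΛ) (hΛ _ (hV hx)) rfl
      exact cluster_transfer hd Vset.finite_toSet hSadj hSopenO' hagreeOO' hx hA
    · intro y z hy hz hyz
      rw [← hsame v hvΛ y z hy hz hyz]; exact hBv y z hy hz hyz

end Aux6
section Aux7
variable {d : ℕ}

lemma measA (M : ℝ) (x : V d) :
    MeasurableSet {wgt : Sym2 (V d) → ℝ | (cluster {e | wgt e ≤ M} x).Infinite} := by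
  classical
  have hconn : ∀ y : V d,
      MeasurableSet {wgt : Sym2 (V d) → ℝ | ConnectedIn {e | wgt e ≤ M} x y} := by
    intro y
    have hrw : {wgt : Sym2 (V d) → ℝ | ConnectedIn {e | wgt e ≤ M} x y} =
        ⋃ (n : ℕ), ⋃ (γ : Fin (n + 1) → V d),
          {wgt : Sym2 (V d) → ℝ |
            IsPathFrom n γ x y ∧ ∀ i : Fin n, wgt s(γ i.castSucc, γ i.succ) ≤ M} := by
      ext wgt
      simp only [Set.mem_setOf_eq, Set.mem_iUnion]
      exact Iff.rfl
    rw [hrw]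
    refine MeasurableSet.iUnion fun n => MeasurableSet.iUnion fun γ => ?_
    by_cases hp : IsPathFrom n γ x y
    · have : {wgt : Sym2 (V d) → ℝ |
          IsPathFrom n γ x y ∧ ∀ i : Fin n, wgt s(γ i.castSucc, γ i.succ) ≤ M} =
          ⋂ i : Fin n,
            (fun wgt : Sym2 (V d) → ℝ => wgt s(γ i.castSucc, γ i.succ)) ⁻¹' Set.Iic M := by
        ext wgt; simp [hp, Set.mem_iInter]
      rw [this]
      exact MeasurableSet.iInter fun i => (measurable_pi_apply _) measurableSet_Iic
    · have : {wgt : Sym2 (V d) → ℝ |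
          IsPathFrom n γ x y ∧ ∀ i : Fin n, wgt s(γ i.castSucc, γ i.succ) ≤ M} = ∅ := by
        ext wgt; simp [hp]
      rw [this]
      exact MeasurableSet.empty
  have h1 : {wgt : Sym2 (V d) → ℝ | (cluster {e | wgt e ≤ M} x).Infinite} =
      ⋂ (F : Finset (V d)), ⋃ (y : V d),
        {wgt : Sym2 (V d) → ℝ | y ∉ F ∧ ConnectedIn {e | wgt e ≤ M} x y} := by
    ext wgt
    simp only [Set.mem_setOf_eq, Set.mem_iInter, Set.mem_iUnion]
    constructor
    · intro hinf F
      obtain ⟨y, hy1, hy2⟩ := hinf.exists_notMem_finset F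
      exact ⟨y, hy2, hy1⟩
    · intro hF
      by_contra hfin
      rw [Set.not_infinite] at hfin
      obtain ⟨y, h1, h2⟩ := hF hfin.toFinset
      exact h1 (hfin.mem_toFinset.2 h2)
  rw [h1]
  refine MeasurableSet.iInter fun F => MeasurableSet.iUnion fun y => ?_
  by_cases hy : y ∈ F
  · have : {wgt : Sym2 (V d) → ℝ | y ∉ F ∧ ConnectedIn {e | wgt e ≤ M} x y} = ∅ := by
      ext wgt; simp [hy]
    rw [this]; exact MeasurableSet.empty
  · have : {wgt : Sym2 (V d) → ℝ | y ∉ F ∧ ConnectedIn {e | wgt e ≤ M} x y} =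
        {wgt : Sym2 (V d) → ℝ | ConnectedIn {e | wgt e ≤ M} x y} := by
      ext wgt; simp [hy]
    rw [this]; exact hconn y

lemma measB (M : ℝ) (v : V d) :
    MeasurableSet {wgt : Sym2 (V d) → ℝ | ∀ y z : V d,
      (Finset.univ.sup fun j => ((y - v) j).natAbs) = 1 →
      (Finset.univ.sup fun j => ((z - v) j).natAbs) = 1 →
      adj y z → wgt s(y, z) ≤ M} := by
  have hrw : {wgt : Sym2 (V d) → ℝ | ∀ y z : V d,
      (Finset.univ.sup fun j => ((y - v) j).natAbs) = 1 →
      (Finset.univ.sup fun j => ((z - v) j).natAbs) = 1 →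
      adj y z → wgt s(y, z) ≤ M} =
      ⋂ (y : V d), ⋂ (z : V d),
        {wgt : Sym2 (V d) → ℝ |
          (Finset.univ.sup fun j => ((y - v) j).natAbs) = 1 →
          (Finset.univ.sup fun j => ((z - v) j).natAbs) = 1 →
          adj y z → wgt s(y, z) ≤ M} := by
    ext wgt
    simp only [Set.mem_setOf_eq, Set.mem_iInter]
  rw [hrw]
  refine MeasurableSet.iInter fun y => MeasurableSet.iInter fun z => ?_
  by_cases hc : (Finset.univ.sup fun j => ((y - v) j).natAbs) = 1 ∧
      (Finset.univ.sup fun j => ((z - v) j).natAbs) = 1 ∧ adj y z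
  · have : {wgt : Sym2 (V d) → ℝ |
        (Finset.univ.sup fun j => ((y - v) j).natAbs) = 1 →
        (Finset.univ.sup fun j => ((z - v) j).natAbs) = 1 →
        adj y z → wgt s(y, z) ≤ M} =
        (fun wgt : Sym2 (V d) → ℝ => wgt s(y, z)) ⁻¹' Set.Iic M := by
      ext wgt
      simp only [Set.mem_setOf_eq, Set.mem_preimage, Set.mem_Iic]
      exact ⟨fun h => h hc.1 hc.2.1 hc.2.2, fun h _ _ _ => h⟩
    rw [this]
    exact (measurable_pi_apply _) measurableSet_Iic
  · have : {wgt : Sym2 (V d) → ℝ |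
        (Finset.univ.sup fun j => ((y - v) j).natAbs) = 1 →
        (Finset.univ.sup fun j => ((z - v) j).natAbs) = 1 →
        adj y z → wgt s(y, z) ≤ M} = Set.univ := by
      ext wgt
      simp only [Set.mem_setOf_eq, Set.mem_univ, iff_true]
      intro h1 h2 h3
      exact absurd ⟨h1, h2, h3⟩ hc
    rw [this]
    exact MeasurableSet.univ

lemma measurableSet_shieldSet (M : ℝ) (Λ Vset : Finset (V d)) :
    MeasurableSet {wgt : Sym2 (V d) → ℝ | shieldSet M wgt Λ = (Vset : Set (V d))} := by
  classical
  by_cases hV : (Vset : Set (V d)) ⊆ (Λ : Set (V d))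
  · have hstep : {wgt : Sym2 (V d) → ℝ | shieldSet M wgt Λ = (Vset : Set (V d))} =
        ⋂ (v : V d) (_ : v ∈ (Λ : Set (V d))),
          {wgt : Sym2 (V d) → ℝ | v ∈ shieldSet M wgt Λ ↔ v ∈ Vset} := by
      ext wgt
      simp only [Set.mem_setOf_eq, Set.mem_iInter]
      constructor
      · intro h v hv
        rw [h]; exact Iff.rfl
      · intro h
        ext u
        by_cases hu : u ∈ (Λ : Set (V d))
        · rw [h u hu]; exact Iff.rfl
        · constructor
          · intro hmem; exact absurd hmem.1 hu
          · intro hmem; exact absurd (hV hmem) hu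
    rw [hstep]
    refine MeasurableSet.biInter (Set.to_countable _) fun v hv => ?_
    have hAB : MeasurableSet {wgt : Sym2 (V d) → ℝ | v ∈ shieldSet M wgt Λ} := by
      have : {wgt : Sym2 (V d) → ℝ | v ∈ shieldSet M wgt Λ} =
          {wgt : Sym2 (V d) → ℝ | (cluster {e | wgt e ≤ M} (v - e1 d)).Infinite} ∩
          {wgt : Sym2 (V d) → ℝ | ∀ y z : V d,
            (Finset.univ.sup fun j => ((y - v) j).natAbs) = 1 →
            (Finset.univ.sup fun j => ((z - v) j).natAbs) = 1 →
            adj y z → wgt s(y, z) ≤ M} := by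
        ext wgt
        simp only [Set.mem_setOf_eq, Set.mem_inter_iff]
        exact ⟨fun h => ⟨h.2.1, h.2.2⟩, fun h => ⟨hv, h.1, h.2⟩⟩
      rw [this]
      exact (measA M _).inter (measB M v)
    by_cases hvV : v ∈ Vset
    · have : {wgt : Sym2 (V d) → ℝ | v ∈ shieldSet M wgt Λ ↔ v ∈ Vset} =
          {wgt : Sym2 (V d) → ℝ | v ∈ shieldSet M wgt Λ} := by
        ext wgt; simp [hvV]
      rw [this]; exact hAB
    · have : {wgt : Sym2 (V d) → ℝ | v ∈ shieldSet M wgt Λ ↔ v ∈ Vset} =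
          {wgt : Sym2 (V d) → ℝ | v ∈ shieldSet M wgt Λ}ᶜ := by
        ext wgt; simp [hvV]
      rw [this]; exact hAB.compl
  · have : {wgt : Sym2 (V d) → ℝ | shieldSet M wgt Λ = (Vset : Set (V d))} = ∅ := by
      ext wgt
      simp only [Set.mem_setOf_eq, Set.mem_empty_iff_false, iff_false]
      intro h
      exact hV (by rw [← h]; exact fun u hu => hu.1)
    rw [this]; exact MeasurableSet.empty

end Aux7
section Aux8
variable {d : ℕ}

/-- the set of edges incident to a vertex of `Vset`. -/
def inc (Vset : Finset (V d)) : Set (Edge d) := {e | ∃ v ∈ Vset, v ∈ e.1}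

open Classical in
/-- extension of a weight configuration on non-incident edges by zero. -/
noncomputable def restExt (Vset : Finset (V d))
    (g : {e : Edge d // e ∉ inc Vset} → ℝ) : Sym2 (V d) → ℝ :=
  fun s => if h : ∃ e : {e : Edge d // e ∉ inc Vset}, e.1.1 = s then g h.choose else 0

lemma restExt_eq {Vset : Finset (V d)} (wgt : Sym2 (V d) → ℝ) (s : Sym2 (V d))
    (h : ∃ e : {e : Edge d // e ∉ inc Vset}, e.1.1 = s) :
    restExt Vset (fun e => wgt e.1.1) s = wgt s := by
  unfold restExt
  rw [dif_pos h]
  show wgt h.choose.1.1 = wgt s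
  rw [h.choose_spec]

lemma measurable_restExt (Vset : Finset (V d)) : Measurable (restExt Vset) := by
  apply measurable_pi_lambda
  intro s
  by_cases h : ∃ e : {e : Edge d // e ∉ inc Vset}, e.1.1 = s
  · simp only [restExt, dif_pos h]; exact measurable_pi_apply _
  · simp only [restExt, dif_neg h]; exact measurable_const

lemma edge_not_inc {Vset : Finset (V d)} {a b : V d} (hab : adj a b)
    (h : ∀ v ∈ Vset, v ≠ a ∧ v ≠ b) :
    ∃ e : {e : Edge d // e ∉ inc Vset}, e.1.1 = s(a, b) := by
  refine ⟨⟨⟨s(a, b), a, b, hab, rfl⟩, ?_⟩, rfl⟩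
  rintro ⟨v, hv, hmem⟩
  rw [Sym2.mem_iff] at hmem
  rcases hmem with rfl | rfl
  exacts [(h v hv).1 rfl, (h v hv).2 rfl]

lemma shield_event_factor (hd : 2 ≤ d) (M : ℝ) (Λ : Finset (V d))
    (hΛ : ∀ v ∈ Λ, ∃ z : V d, v = e1 d + 3 • z) (Vset : Finset (V d)) (hV : Vset ⊆ Λ)
    (wgt : Sym2 (V d) → ℝ) :
    shieldSet M wgt Λ = (Vset : Set (V d)) ↔
      shieldSet M (restExt Vset (fun e => wgt e.1.1)) Λ = (Vset : Set (V d)) := by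
  have hag : ∀ a b : V d, adj a b → (∀ v ∈ Vset, v ≠ a ∧ v ≠ b) →
      wgt s(a, b) = restExt Vset (fun e => wgt e.1.1) s(a, b) := fun a b hab h =>
    (restExt_eq wgt _ (edge_not_inc hab h)).symm
  constructor
  · exact shield_invariance hd M Λ hΛ Vset hV _ _ hag
  · exact shield_invariance hd M Λ hΛ Vset hV _ _
      (fun a b hab h => (hag a b hab h).symm)

end Aux8

/-- Lemma 3.6 (Shielding lemma): the count `N_{V,r}` of vertices of `V` all of whose incident
edges have weight `> r` is independent of the event `{V_Λ = V}`. -/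
theorem shielding_lemma (d : ℕ) (hd : 2 ≤ d)
    {Ω : Type} [MeasurableSpace Ω] (P : Measure Ω) [IsProbabilityMeasure P]
    (μ : Measure ℝ) [IsProbabilityMeasure μ] (w : Ω → Sym2 (V d) → ℝ)
    (hiid : IsIIDWeights P μ w) (M : ℝ) (hM : 0 < M)
    (Λ : Finset (V d)) (hΛ : ∀ v ∈ Λ, ∃ z : V d, v = e1 d + 3 • z)
    (Vset : Finset (V d)) (hV : Vset ⊆ Λ) (r : ℝ) (hr : 0 < r) :
    IndepFun
      (fun ω => {v ∈ (Vset : Set (V d)) | ∀ u : V d, adj v u → r < w ω s(v, u)}.ncard)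
      (Set.indicator {ω | shieldSet M (w ω) Λ = (Vset : Set (V d))} fun _ => (1 : ℝ))
      P := by
  classical
  obtain ⟨hmeas, hindep, hmap, hpos⟩ := hiid
  have h_indep : Indep
      (⨆ e ∈ inc Vset, MeasurableSpace.comap (fun ω => w ω e.1) inferInstance)
      (⨆ e ∈ (inc Vset)ᶜ, MeasurableSpace.comap (fun ω => w ω e.1) inferInstance) P :=
    indep_iSup_of_disjoint (fun e => measurable_iff_comap_le.1 (hmeas e))
      ((iIndepFun_iff_iIndep _ _ _).1 hindep) disjoint_compl_right
  -- measurability of the count w.r.t. incident edges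
  have hPv : ∀ v ∈ Vset,
      MeasurableSet[⨆ e ∈ inc Vset, MeasurableSpace.comap (fun ω => w ω e.1) inferInstance]
        {ω | ∀ u : V d, adj v u → r < w ω s(v, u)} := by
    intro v hv
    have hrw : {ω | ∀ u : V d, adj v u → r < w ω s(v, u)} =
        ⋂ u : V d, {ω | adj v u → r < w ω s(v, u)} := by
      ext ω; simp only [Set.mem_setOf_eq, Set.mem_iInter]
    rw [hrw]
    refine MeasurableSet.iInter fun u => ?_
    by_cases hadj : adj v u
    · have he : (⟨s(v, u), v, u, hadj, rfl⟩ : Edge d) ∈ inc Vset :=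
        ⟨v, hv, Sym2.mem_mk_left v u⟩
      have hle : MeasurableSpace.comap (fun ω => w ω s(v, u)) inferInstance ≤
          ⨆ e ∈ inc Vset, MeasurableSpace.comap (fun ω => w ω e.1) inferInstance :=
        le_iSup₂ (f := fun (e : Edge d) (_ : e ∈ inc Vset) =>
          MeasurableSpace.comap (fun ω => w ω e.1) inferInstance)
          (⟨s(v, u), v, u, hadj, rfl⟩ : Edge d) he
      have hwm : Measurable[⨆ e ∈ inc Vset,
          MeasurableSpace.comap (fun ω => w ω e.1) inferInstance]
          (fun ω => w ω s(v, u)) := measurable_iff_comap_le.2 hle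
      have : {ω | adj v u → r < w ω s(v, u)} =
          (fun ω => w ω s(v, u)) ⁻¹' Set.Ioi r := by
        ext ω; simp [hadj]
      rw [this]
      exact hwm measurableSet_Ioi
    · have : {ω | adj v u → r < w ω s(v, u)} = Set.univ := by
        ext ω; simp [hadj]
      rw [this]
      exact MeasurableSet.univ
  have hf1 : Measurable[⨆ e ∈ inc Vset,
      MeasurableSpace.comap (fun ω => w ω e.1) inferInstance]
      (fun ω => {v ∈ (Vset : Set (V d)) | ∀ u : V d, adj v u → r < w ω s(v, u)}.ncard) := by
    have hf_eq : (fun ω =>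
        {v ∈ (Vset : Set (V d)) | ∀ u : V d, adj v u → r < w ω s(v, u)}.ncard) =
        fun ω => ∑ v ∈ Vset, if (∀ u : V d, adj v u → r < w ω s(v, u)) then 1 else 0 := by
      funext ω
      have : {v ∈ (Vset : Set (V d)) | ∀ u : V d, adj v u → r < w ω s(v, u)} =
          ↑(Vset.filter (fun v => ∀ u : V d, adj v u → r < w ω s(v, u))) := by
        ext v; simp
      rw [this, Set.ncard_coe_finset, Finset.card_filter]
    rw [hf_eq]
    refine Finset.measurable_sum _ fun v hv => ?_
    exact Measurable.ite (hPv v hv) measurable_const measurable_const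
  -- measurability of the event w.r.t. non-incident edges
  have hE2 : MeasurableSet (restExt Vset ⁻¹'
      {wgt : Sym2 (V d) → ℝ | shieldSet M wgt Λ = (Vset : Set (V d))}) :=
    measurable_restExt Vset (measurableSet_shieldSet M Λ Vset)
  have hEeq : {ω | shieldSet M (w ω) Λ = (Vset : Set (V d))} =
      (fun ω (e : {e : Edge d // e ∉ inc Vset}) => w ω e.1.1) ⁻¹'
        (restExt Vset ⁻¹'
          {wgt : Sym2 (V d) → ℝ | shieldSet M wgt Λ = (Vset : Set (V d))}) := by
    ext ω
    simp only [Set.mem_setOf_eq, Set.mem_preimage]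
    exact shield_event_factor hd M Λ hΛ Vset hV (w ω)
  have hcomap : MeasurableSpace.comap
      (fun ω (e : {e : Edge d // e ∉ inc Vset}) => w ω e.1.1) MeasurableSpace.pi ≤
      ⨆ e ∈ (inc Vset)ᶜ, MeasurableSpace.comap (fun ω => w ω e.1) inferInstance := by
    have hpi : (MeasurableSpace.pi :
        MeasurableSpace ({e : Edge d // e ∉ inc Vset} → ℝ)) =
        ⨆ e' : {e : Edge d // e ∉ inc Vset},
          MeasurableSpace.comap (fun g => g e') inferInstance := rfl
    rw [hpi, MeasurableSpace.comap_iSup]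
    refine iSup_le fun e' => ?_
    rw [MeasurableSpace.comap_comp]
    exact le_iSup₂ (f := fun (e : Edge d) (_ : e ∈ (inc Vset)ᶜ) =>
      MeasurableSpace.comap (fun ω => w ω e.1) inferInstance) e'.1 e'.2
  have hE : MeasurableSet[⨆ e ∈ (inc Vset)ᶜ,
      MeasurableSpace.comap (fun ω => w ω e.1) inferInstance]
      {ω | shieldSet M (w ω) Λ = (Vset : Set (V d))} := by
    apply hcomap
    rw [hEeq]
    exact ⟨_, hE2, rfl⟩
  have hg1 : Measurable[⨆ e ∈ (inc Vset)ᶜ,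
      MeasurableSpace.comap (fun ω => w ω e.1) inferInstance]
      (Set.indicator {ω | shieldSet M (w ω) Λ = (Vset : Set (V d))} fun _ => (1 : ℝ)) :=
    Measurable.indicator measurable_const hE
  rw [IndepFun_iff_Indep]
  exact indep_of_indep_of_le_left
    (indep_of_indep_of_le_right h_indep (measurable_iff_comap_le.1 hg1))
    (measurable_iff_comap_le.1 hf1)

end FPPBoundary
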